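/- For n ≥ 2 and m ≥ 3, the stabilizer of any vertex in the automorphism group of the Hamming graph H(n,m) has order at most ((m-1)!)^n · n!. -/

import Mathlib

open Function Finset

/-- The Hamming graph `H(n,m)`: vertices are `n`-tuples over `Fin m`,
adjacent iff they differ in exactly one coordinate. -/
def hammingGraph (n m : ℕ) : SimpleGraph (Fin n → Fin m) where
  Adj x y := hammingDist x y = 1
  symm := by constructor; intro x y h; exact (hammingDist_comm y x).trans h
  loopless := by constructor; intro x h; simp [hammingDist_self] at h

namespace HammingAux

variable {n m : ℕ}

lemma hd_def (x y : Fin n → Fin m) :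
    hammingDist x y = (Finset.univ.filter fun i => x i ≠ y i).card := rfl

lemma one_iff {x v : Fin n → Fin m} :
    hammingDist x v = 1 ↔ ∃ i a, a ≠ x i ∧ v = Function.update x i a := by
  rw [hd_def, Finset.card_eq_one]
  constructor
  · rintro ⟨i, hi⟩
    refine ⟨i, v i, ?_, ?_⟩
    · have : i ∈ Finset.univ.filter fun j => x j ≠ v j := hi ▸ Finset.mem_singleton_self i
      exact fun h => (Finset.mem_filter.1 this).2 h.symm
    · funext j
      by_cases hj : j = i
      · subst hj; simp
      · have : j ∉ Finset.univ.filter fun t => x t ≠ v t := by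
          rw [hi]; simpa using hj
        simp only [Finset.mem_filter, Finset.mem_univ, true_and, not_not] at this
        rw [Function.update_of_ne hj, this]
  · rintro ⟨i, a, ha, rfl⟩
    refine ⟨i, ?_⟩
    ext j
    simp only [Finset.mem_filter, Finset.mem_univ, true_and, Finset.mem_singleton]
    constructor
    · intro h
      by_contra hj
      rw [Function.update_of_ne hj] at h
      exact h rfl
    · rintro rfl; simp [ha.symm]

lemma hd_update {x : Fin n → Fin m} {i : Fin n} {a : Fin m} (h : a ≠ x i) :
    hammingDist x (Function.update x i a) = 1 :=
  one_iff.2 ⟨i, a, h, rfl⟩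

lemma hd_update_update {x : Fin n → Fin m} {i : Fin n} {a b : Fin m}
    (hab : a ≠ b) :
    hammingDist (Function.update x i a) (Function.update x i b) = 1 := by
  apply one_iff.2
  refine ⟨i, b, ?_, ?_⟩
  · simpa using fun h => hab h.symm
  · rw [Function.update_idem]


lemma adj_iff {u v : Fin n → Fin m} :
    (hammingGraph n m).Adj u v ↔ hammingDist u v = 1 := Iff.rfl

lemma common_nbr {x v : Fin n → Fin m} {i j : Fin n} (hij : i ≠ j)
    (hvi : v i ≠ x i) (hvj : v j ≠ x j) {z : Fin n → Fin m}
    (hz1 : hammingDist (Function.update v i (x i)) z = 1)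
    (hz2 : hammingDist (Function.update v j (x j)) z = 1) :
    z = v ∨ z = Function.update (Function.update v i (x i)) j (x j) := by
  set y' := Function.update v i (x i) with hy'
  set y'' := Function.update v j (x j) with hy''
  obtain ⟨k, c, hc, hzk⟩ := one_iff.1 hz1
  obtain ⟨l, d, hd, hzl⟩ := one_iff.1 hz2
  have hzk' : ∀ t, t ≠ k → z t = y' t := fun t ht => by
    rw [hzk, Function.update_of_ne ht]
  have hzkk : z k = c := by rw [hzk]; simp
  have hzl' : ∀ t, t ≠ l → z t = y'' t := fun t ht => by
    rw [hzl, Function.update_of_ne ht]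
  have hzll : z l = d := by rw [hzl]; simp
  have hy'i : y' i = x i := by simp [hy']
  have hy'j : y' j = v j := by simp [hy', Function.update_of_ne (Ne.symm hij)]
  have hy''j : y'' j = x j := by simp [hy'']
  have hy''i : y'' i = v i := by simp [hy'', Function.update_of_ne hij]
  have hk : k = i ∨ k = j := by
    by_contra h
    push_neg at h
    obtain ⟨hki, hkj⟩ := h
    have h1 : y' k = v k := Function.update_of_ne hki _ _
    have h2 : y'' k = v k := Function.update_of_ne hkj _ _
    have hzk2 : z k ≠ y'' k := by rw [hzkk, h2, ← h1]; exact hc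
    have hkl : k = l := by
      by_contra hkl
      exact hzk2 (hzl' k hkl)
    have e1 : z i = y' i := hzk' i (fun h => hki h.symm)
    have e2 : z i = y'' i := hzl' i (fun h => (hkl ▸ hki) h.symm)
    rw [hy'i] at e1
    rw [hy''i] at e2
    rw [e1] at e2
    exact hvi e2.symm
  rcases hk with rfl | rfl
  · -- k = i : z = v
    left
    have hzj : z j = v j := by rw [hzk' j (Ne.symm hij), hy'j]
    have hjl : j = l := by
      by_contra hjl
      have := hzl' j hjl
      rw [hzj, hy''j] at this
      exact hvj this
    subst hjl
    have hzi : z k = v k := by rw [hzl' k hij, hy''i]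
    funext t
    by_cases ht : t = k
    · subst ht; exact hzi
    · rw [hzk' t ht, hy', Function.update_of_ne ht]
  · -- k = j : z = w
    right
    have hzi : z i = y' i := hzk' i hij
    have hil : i = l := by
      by_contra hil
      have := hzl' i hil
      rw [hzi, hy'i, hy''i] at this
      exact hvi this.symm
    subst hil
    have hzj : z k = x k := by rw [hzl' k (Ne.symm hij), hy''j]
    funext t
    by_cases ht : t = k
    · subst ht; rw [hzj]; simp
    · rw [hzk' t ht, Function.update_of_ne ht]

lemma filter_update (x v : Fin n → Fin m) (i : Fin n) :
    (Finset.univ.filter fun t => x t ≠ Function.update v i (x i) t)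
      = (Finset.univ.filter fun t => x t ≠ v t).erase i := by
  ext t
  by_cases ht : t = i
  · subst ht; simp
  · simp [Function.update_of_ne ht, ht]

lemma fix_all {x : Fin n → Fin m} (f : hammingGraph n m ≃g hammingGraph n m)
    (hx : f x = x) (h1 : ∀ v, hammingDist x v = 1 → f v = v) (v : Fin n → Fin m) :
    f v = v := by
  suffices H : ∀ d v, hammingDist x v = d → f v = v by
    exact H _ v rfl
  intro d
  induction d using Nat.strong_induction_on with
  | _ d IH =>
    intro v hv
    match d, hv with
    | 0, hv =>
      have : x = v := hammingDist_eq_zero.1 hv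
      subst this; exact hx
    | 1, hv => exact h1 v hv
    | (d+2), hv =>
      have hcard : 1 < (Finset.univ.filter fun t => x t ≠ v t).card := by
        rw [← hd_def, hv]; omega
      obtain ⟨i, hi, j, hj, hij⟩ := Finset.one_lt_card.1 hcard
      have hvi : v i ≠ x i := Ne.symm (Finset.mem_filter.1 hi).2
      have hvj : v j ≠ x j := Ne.symm (Finset.mem_filter.1 hj).2
      set y' := Function.update v i (x i) with hy'
      set y'' := Function.update v j (x j) with hy''
      set w := Function.update y' j (x j) with hw
      have hdy' : hammingDist x y' = d + 1 := by
        rw [hd_def, filter_update, Finset.card_erase_of_mem hi, ← hd_def, hv]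
        omega

      have hdy'' : hammingDist x y'' = d + 1 := by
        rw [hd_def, filter_update, Finset.card_erase_of_mem hj, ← hd_def, hv]
        omega
      have hdw : hammingDist x w ≤ d + 1 := by
        rw [hd_def, hw, filter_update x y' j]
        calc ((Finset.univ.filter fun t => x t ≠ y' t).erase j).card
            ≤ (Finset.univ.filter fun t => x t ≠ y' t).card := Finset.card_erase_le
          _ = d + 1 := by rw [← hd_def, hdy']
      have hfy' : f y' = y' := IH (d+1) (by omega) y' hdy'
      have hfy'' : f y'' = y'' := IH (d+1) (by omega) y'' hdy''
      have hfw : f w = w := IH (hammingDist x w) (by omega) w rfl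
      have ha1 : hammingDist y' (f v) = 1 := by
        have : (hammingGraph n m).Adj v y' :=
          adj_iff.2 (by rw [hy']; exact hd_update hvi.symm)
        have := f.map_rel_iff.2 this
        rw [hfy'] at this
        rw [hammingDist_comm]
        exact adj_iff.1 this
      have ha2 : hammingDist y'' (f v) = 1 := by
        have : (hammingGraph n m).Adj v y'' :=
          adj_iff.2 (by rw [hy'']; exact hd_update hvj.symm)
        have := f.map_rel_iff.2 this
        rw [hfy''] at this
        rw [hammingDist_comm]
        exact adj_iff.1 this
      rcases common_nbr hij hvi hvj ha1 ha2 with h | h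
      · exact h
      · exfalso
        rw [← hw] at h
        have : v = w := f.injective (by rw [h, hfw])
        have hwi : w i = x i := by
          rw [hw, Function.update_of_ne hij, hy']
          simp
        exact hvi (by rw [this, hwi])


noncomputable def coordOf {x v : Fin n → Fin m} (h : hammingDist x v = 1) : Fin n :=
  (one_iff.1 h).choose

lemma coordOf_prop {x v : Fin n → Fin m} (h : hammingDist x v = 1) :
    v (coordOf h) ≠ x (coordOf h) ∧ v = Function.update x (coordOf h) (v (coordOf h)) := by
  obtain ⟨a, ha, hv⟩ := (one_iff.1 h).choose_spec
  have hva : v (coordOf h) = a := by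
    have h2 := congrFun hv ((one_iff.1 h).choose)
    simpa [coordOf] using h2
  constructor
  · rw [hva]; exact ha
  · rw [hva]; exact hv

lemma coordOf_adj {x u v : Fin n → Fin m} (h1 : hammingDist x u = 1)
    (h2 : hammingDist x v = 1) (huv : hammingDist u v = 1) :
    coordOf h1 = coordOf h2 := by
  by_contra hne
  have hui : u (coordOf h1) ≠ v (coordOf h1) := by
    have hvx : v (coordOf h1) = x (coordOf h1) := by
      rw [(coordOf_prop h2).2, Function.update_of_ne hne]
    rw [hvx]; exact (coordOf_prop h1).1
  have huj : u (coordOf h2) ≠ v (coordOf h2) := by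
    have hux : u (coordOf h2) = x (coordOf h2) := by
      rw [(coordOf_prop h1).2, Function.update_of_ne (Ne.symm hne)]
    rw [hux]
    exact fun hh => (coordOf_prop h2).1 hh.symm
  have h2' : 1 < hammingDist u v := by
    rw [hd_def]
    exact Finset.one_lt_card.2 ⟨_, by simp [hui], _, by simp [huj], hne⟩
  rw [huv] at h2'
  omega

lemma map_nbhd {x : Fin n → Fin m} (f : hammingGraph n m ≃g hammingGraph n m)
    (hx : f x = x) {v : Fin n → Fin m} (h : hammingDist x v = 1) :
    hammingDist x (f v) = 1 := by
  have h' : (hammingGraph n m).Adj (f x) (f v) := f.map_rel_iff.2 (adj_iff.2 h)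
  rw [hx] at h'
  exact adj_iff.1 h'

/-- the coordinate permutation induced by `f`. -/
noncomputable def sig {x : Fin n → Fin m} (f : hammingGraph n m ≃g hammingGraph n m)
    (hx : f x = x) (a₀ : Fin n → Fin m) (ha₀ : ∀ i, a₀ i ≠ x i) : Fin n → Fin n :=
  fun i => coordOf (map_nbhd f hx (hd_update (ha₀ i)))

lemma coord_const {x : Fin n → Fin m} (f : hammingGraph n m ≃g hammingGraph n m)
    (hx : f x = x) (a₀ : Fin n → Fin m) (ha₀ : ∀ i, a₀ i ≠ x i)
    {i : Fin n} {a : Fin m} (ha : a ≠ x i) :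
    coordOf (map_nbhd f hx (hd_update ha)) = sig f hx a₀ ha₀ i := by
  rcases eq_or_ne a (a₀ i) with rfl | hne
  · rfl
  · exact coordOf_adj _ _
      (adj_iff.1 (f.map_rel_iff.2 (adj_iff.2 (hd_update_update hne))))

lemma sig_spec {x : Fin n → Fin m} (f : hammingGraph n m ≃g hammingGraph n m)
    (hx : f x = x) (a₀ : Fin n → Fin m) (ha₀ : ∀ i, a₀ i ≠ x i)
    {i : Fin n} {a : Fin m} (ha : a ≠ x i) :
    f (Function.update x i a) (sig f hx a₀ ha₀ i) ≠ x (sig f hx a₀ ha₀ i) ∧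
    f (Function.update x i a) =
      Function.update x (sig f hx a₀ ha₀ i)
        (f (Function.update x i a) (sig f hx a₀ ha₀ i)) := by
  have hc := coord_const f hx a₀ ha₀ ha
  have hp := coordOf_prop (map_nbhd f hx (hd_update ha))
  rw [hc] at hp
  exact hp

/-- the value map on the `i`-th clique. -/
noncomputable def tmap {x : Fin n → Fin m} (f : hammingGraph n m ≃g hammingGraph n m)
    (hx : f x = x) (a₀ : Fin n → Fin m) (ha₀ : ∀ i, a₀ i ≠ x i)
    (i : Fin n) (a : {a : Fin m // a ≠ x i}) :
    {b : Fin m // b ≠ x (sig f hx a₀ ha₀ i)} :=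
  ⟨f (Function.update x i a.1) (sig f hx a₀ ha₀ i), (sig_spec f hx a₀ ha₀ a.2).1⟩

lemma tmap_inj {x : Fin n → Fin m} (f : hammingGraph n m ≃g hammingGraph n m)
    (hx : f x = x) (a₀ : Fin n → Fin m) (ha₀ : ∀ i, a₀ i ≠ x i) (i : Fin n) :
    Function.Injective (tmap f hx a₀ ha₀ i) := by
  intro a a' h
  have h1 := (sig_spec f hx a₀ ha₀ a.2).2
  have h2 := (sig_spec f hx a₀ ha₀ a'.2).2
  have hval : (tmap f hx a₀ ha₀ i a).1 = (tmap f hx a₀ ha₀ i a').1 := by rw [h]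
  have heq : f (Function.update x i a.1) = f (Function.update x i a'.1) := by
    rw [h1, h2]
    exact congrArg _ hval
  have h3 := f.injective heq
  have h4 := congrFun h3 i
  rw [Function.update_self, Function.update_self] at h4
  exact Subtype.ext h4

lemma card_ne (c : Fin m) : Fintype.card {a : Fin m // a ≠ c} = m - 1 := by
  rw [Fintype.card_subtype_compl, Fintype.card_subtype_eq, Fintype.card_fin]

lemma sig_inj {x : Fin n → Fin m} (f : hammingGraph n m ≃g hammingGraph n m)
    (hx : f x = x) (a₀ : Fin n → Fin m) (ha₀ : ∀ i, a₀ i ≠ x i) (hm : 2 ≤ m) :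
    Function.Injective (sig f hx a₀ ha₀) := by
  haveI : Nontrivial (Fin m) :=
    ⟨⟨0, by omega⟩, ⟨1, by omega⟩, fun h => by simpa using congrArg Fin.val h⟩
  intro i j hσ
  by_contra hij
  have hbij : ∀ i : Fin n, Function.Bijective (tmap f hx a₀ ha₀ i) := by
    intro i
    rw [Fintype.bijective_iff_injective_and_card]
    exact ⟨tmap_inj f hx a₀ ha₀ i, by rw [card_ne, card_ne]⟩
  obtain ⟨b, hb⟩ := exists_ne (x (sig f hx a₀ ha₀ i))
  obtain ⟨a, hTa⟩ := (hbij i).2 ⟨b, hb⟩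
  obtain ⟨a', hTa'⟩ := (hbij j).2 ⟨b, by rw [← hσ]; exact hb⟩
  have e1 : f (Function.update x i a.1) = Function.update x (sig f hx a₀ ha₀ i) b := by
    rw [(sig_spec f hx a₀ ha₀ a.2).2]
    exact congrArg _ (congrArg Subtype.val hTa)
  have e2 : f (Function.update x j a'.1) = Function.update x (sig f hx a₀ ha₀ j) b := by
    rw [(sig_spec f hx a₀ ha₀ a'.2).2]
    exact congrArg _ (congrArg Subtype.val hTa')
  have heq : Function.update x i a.1 = Function.update x j a'.1 := by
    apply f.injective
    rw [e1, e2, hσ]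
  have h5 := congrFun heq i
  rw [Function.update_self, Function.update_of_ne hij] at h5
  exact a.2 h5


noncomputable def eNe {m : ℕ} (c : Fin m) : {a : Fin m // a ≠ c} ≃ Fin (m - 1) :=
  Fintype.equivFinOfCardEq (card_ne c)

lemma eNe_val_eq {m : ℕ} {c c' : Fin m} (hcc : c = c') {u : {a : Fin m // a ≠ c}}
    {u' : {a : Fin m // a ≠ c'}} (h : eNe c u = eNe c' u') : u.1 = u'.1 := by
  subst hcc
  exact congrArg Subtype.val ((eNe c).injective h)

end HammingAux

open HammingAux Function

/-- For `n ≥ 2`, `m ≥ 3`, the stabilizer of any vertex of `H(n,m)` in the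
automorphism group has at most `((m-1)!)^n * n!` elements. -/
theorem hammingGraph_stabilizer_card_le (n m : ℕ) (hn : 2 ≤ n) (hm : 3 ≤ m)
    (x : Fin n → Fin m) :
    Nat.card {f : hammingGraph n m ≃g hammingGraph n m // f x = x} ≤
      (Nat.factorial (m - 1)) ^ n * Nat.factorial n := by
  classical
  haveI : Nontrivial (Fin m) :=
    ⟨⟨0, by omega⟩, ⟨1, by omega⟩, fun h => by simpa using congrArg Fin.val h⟩
  choose a₀ ha₀ using fun i : Fin n => exists_ne (x i)
  have hm2 : 2 ≤ m := by omega
  let Φ : {f : hammingGraph n m ≃g hammingGraph n m // f x = x} →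
      (Fin n ↪ Fin n) × (Fin n → (Fin (m - 1) ↪ Fin (m - 1))) :=
    fun F => (⟨sig F.1 F.2 a₀ ha₀, sig_inj F.1 F.2 a₀ ha₀ hm2⟩,
      fun i => ⟨fun t => eNe _ (tmap F.1 F.2 a₀ ha₀ i ((eNe (x i)).symm t)),
        fun t t' h => by
          have h1 := (eNe _).injective h
          have h2 := tmap_inj F.1 F.2 a₀ ha₀ i h1
          exact (eNe (x i)).symm.injective h2⟩)
  have hΦ : Function.Injective Φ := by
    rintro ⟨f, hf⟩ ⟨g, hg⟩ hFG
    simp only [Φ, Prod.mk.injEq] at hFG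
    obtain ⟨h1, h2⟩ := hFG
    have hσ : ∀ i, sig f hf a₀ ha₀ i = sig g hg a₀ ha₀ i :=
      fun i => DFunLike.congr_fun h1 i
    have hτ : ∀ (i : Fin n) (a : Fin m) (ha : a ≠ x i),
        f (Function.update x i a) = g (Function.update x i a) := by
      intro i a ha
      have h2i := congrFun h2 i
      have h2a := DFunLike.congr_fun h2i ((eNe (x i)) ⟨a, ha⟩)
      change (eNe _) (tmap f hf a₀ ha₀ i ((eNe (x i)).symm _)) = (eNe _) (tmap g hg a₀ ha₀ i ((eNe (x i)).symm _)) at h2a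
      simp only [Function.Embedding.coeFn_mk, Equiv.symm_apply_apply] at h2a
      have hval := eNe_val_eq (congrArg x (hσ i)) h2a
      simp only [tmap] at hval
      rw [← hσ i] at hval
      rw [(sig_spec f hf a₀ ha₀ ha).2, (sig_spec g hg a₀ ha₀ ha).2, ← hσ i, ← hval]
    have hnb : ∀ v, hammingDist x v = 1 → f v = g v := by
      intro v hv
      obtain ⟨hne, hveq⟩ := coordOf_prop hv
      have h3 := hτ (coordOf hv) (v (coordOf hv)) hne
      rwa [← hveq] at h3
    have hsymm : ∀ v, (f.trans g.symm) v = v := by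
      intro v
      apply fix_all
      · show g.symm (f x) = x
        rw [hf]
        have h4 : g.symm x = g.symm (g x) := by rw [hg]
        rw [h4]
        exact g.symm_apply_apply x
      · intro v hv
        show g.symm (f v) = v
        rw [hnb v hv]
        exact g.symm_apply_apply v
    have hfg : ∀ v, f v = g v := by
      intro v
      have h5 := congrArg g (hsymm v)
      show f v = g v
      rw [← g.apply_symm_apply (f v)]
      exact congrArg g (hsymm v)
    apply Subtype.ext
    exact DFunLike.ext f g hfg
  calc Nat.card {f : hammingGraph n m ≃g hammingGraph n m // f x = x}
      ≤ Nat.card ((Fin n ↪ Fin n) × (Fin n → (Fin (m - 1) ↪ Fin (m - 1)))) :=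
        Nat.card_le_card_of_injective Φ hΦ
    _ = (Nat.factorial (m - 1)) ^ n * Nat.factorial n := by
        rw [Nat.card_eq_fintype_card]
        simp [Fintype.card_embedding_eq, Nat.descFactorial_self, mul_comm]
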